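/- Let f : ℝ^{m₁×m₂} → ℝ be convex and differentiable, λ > 0, and let X, X̃ ∈ ℝ^{m₁×m₂} satisfy f(X) + λ‖X‖_{σ,1} ≤ f(X̃) + λ‖X̃‖_{σ,1} and λ ≥ 2‖∇f(X̃)‖_{σ,∞}. Then ‖P⊥_{X̃}(X − X̃)‖_{σ,1} ≤ 3‖P_{X̃}(X − X̃)‖_{σ,1}. (In the paper f = L_Y, the empirical negative log-likelihood, and X̃ = X̄.) -/

import Mathlib

open MeasureTheory ProbabilityTheory Matrix

/-- Singular values of a rectangular real matrix: square roots of the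
eigenvalues of `Xᵀ * X`. -/
noncomputable def singVals {m₁ m₂ : ℕ} (X : Matrix (Fin m₁) (Fin m₂) ℝ) : Fin m₂ → ℝ :=
  fun i => Real.sqrt ((show (Xᵀ * X).IsHermitian by
    rw [← Matrix.conjTranspose_eq_transpose_of_trivial]; exact Matrix.isHermitian_conjTranspose_mul_self X).eigenvalues i)

/-- Nuclear (Schatten-1) norm `‖·‖_{σ,1}`. -/
noncomputable def nucNorm {m₁ m₂ : ℕ} (X : Matrix (Fin m₁) (Fin m₂) ℝ) : ℝ :=
  ∑ i, singVals X i

/-- Operator (Schatten-∞) norm `‖·‖_{σ,∞}`: the largest singular value. -/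
noncomputable def opNorm {m₁ m₂ : ℕ} (X : Matrix (Fin m₁) (Fin m₂) ℝ) : ℝ :=
  ⨆ i, singVals X i

/-- Frobenius (Schatten-2) norm `‖·‖_{σ,2}`. -/
noncomputable def frobNorm {m₁ m₂ : ℕ} (X : Matrix (Fin m₁) (Fin m₂) ℝ) : ℝ :=
  Real.sqrt (∑ k, ∑ l, (X k l) ^ 2)

/-- Entrywise sup norm `‖·‖_∞`. -/
noncomputable def linfNorm {m₁ m₂ : ℕ} (X : Matrix (Fin m₁) (Fin m₂) ℝ) : ℝ :=
  ⨆ p : Fin m₁ × Fin m₂, |X p.1 p.2|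

/-- The matrix of the orthogonal projection onto a subspace `S` of `ℝ^k`. -/
noncomputable def projM {k : ℕ} (S : Submodule ℝ (EuclideanSpace ℝ (Fin k))) :
    Matrix (Fin k) (Fin k) ℝ :=
  LinearMap.toMatrix (EuclideanSpace.basisFun (Fin k) ℝ).toBasis
    (EuclideanSpace.basisFun (Fin k) ℝ).toBasis
    (S.subtype ∘ₗ (S.orthogonalProjectionOnto).toLinearMap)

/-- The span `S₁(X)` of the left singular vectors of `X`, i.e. its column space
(`S₂(X)`, the span of the right singular vectors, is `colSpace Xᵀ`). -/
noncomputable def colSpace {m₁ m₂ : ℕ} (X : Matrix (Fin m₁) (Fin m₂) ℝ) :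
    Submodule ℝ (EuclideanSpace ℝ (Fin m₁)) :=
  LinearMap.range (Matrix.toEuclideanLin X)

/-- The projection `P⊥_X(T) = P_{S₁(X)⊥} T P_{S₂(X)⊥}`. -/
noncomputable def Pperp {m₁ m₂ : ℕ} (X T : Matrix (Fin m₁) (Fin m₂) ℝ) :
    Matrix (Fin m₁) (Fin m₂) ℝ :=
  projM (Submodule.orthogonal (colSpace X)) * T * projM (Submodule.orthogonal (colSpace Xᵀ))

/-- The projection `P_X(T) = T - P⊥_X(T)`. -/
noncomputable def Ppar {m₁ m₂ : ℕ} (X T : Matrix (Fin m₁) (Fin m₂) ℝ) :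
    Matrix (Fin m₁) (Fin m₂) ℝ :=
  T - Pperp X T

lemma Matrix.isHermitian_transpose_mul_self {m₁ m₂ : ℕ} (X : Matrix (Fin m₁) (Fin m₂) ℝ) :
    (Xᵀ * X).IsHermitian := by
  rw [← Matrix.conjTranspose_eq_transpose_of_trivial]; exact Matrix.isHermitian_conjTranspose_mul_self X

lemma singVals_nonneg {m₁ m₂ : ℕ} (X : Matrix (Fin m₁) (Fin m₂) ℝ) (i : Fin m₂) :
    0 ≤ singVals X i := Real.sqrt_nonneg _

lemma singVals_sq {m₁ m₂ : ℕ} (X : Matrix (Fin m₁) (Fin m₂) ℝ) (i : Fin m₂) :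
    singVals X i ^ 2 = (Matrix.isHermitian_transpose_mul_self X).eigenvalues i := by
  have h := Matrix.eigenvalues_conjTranspose_mul_self_nonneg X i
  simp only [singVals]
  exact Real.sq_sqrt h

lemma svd_exists {m₁ m₂ : ℕ} (X : Matrix (Fin m₁) (Fin m₂) ℝ) :
    ∃ (u : Fin m₂ → Fin m₁ → ℝ) (v : Fin m₂ → Fin m₂ → ℝ),
      (∀ i j, u i ⬝ᵥ u j = if i = j ∧ singVals X i ≠ 0 then 1 else 0) ∧
      (∀ i j, v i ⬝ᵥ v j = if i = j ∧ singVals X i ≠ 0 then 1 else 0) ∧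
      (∀ k l, X k l = ∑ i, singVals X i * u i k * v i l) ∧
      (∀ i, ∃ w, u i = X *ᵥ w) ∧
      (∀ i, ∃ w, v i = Xᵀ *ᵥ w) := by
  set hH := Matrix.isHermitian_transpose_mul_self X with hHdef
  set e : Fin m₂ → Fin m₂ → ℝ := fun i => (hH.eigenvectorBasis i : Fin m₂ → ℝ) with he
  set σ : Fin m₂ → ℝ := singVals X with hσ
  have hee : ∀ i j, e i ⬝ᵥ e j = if i = j then 1 else 0 := by
    intro i j
    have h := hH.eigenvectorBasis.orthonormal
    rw [orthonormal_iff_ite] at h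
    have := h i j
    rw [PiLp.inner_apply] at this
    simpa [dotProduct, mul_comm] using this
  have hmul : ∀ i, (Xᵀ * X) *ᵥ e i = hH.eigenvalues i • e i := fun i =>
    hH.mulVec_eigenvectorBasis i
  have hXe : ∀ i j, (X *ᵥ e i) ⬝ᵥ (X *ᵥ e j) = if i = j then σ i ^ 2 else 0 := by
    intro i j
    have h1 : (X *ᵥ e i) ⬝ᵥ (X *ᵥ e j) = e i ⬝ᵥ ((Xᵀ * X) *ᵥ e j) := by
      rw [← Matrix.vecMul_transpose, ← Matrix.dotProduct_mulVec, Matrix.mulVec_mulVec]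
    rw [h1, hmul j, dotProduct_smul, smul_eq_mul, hee i j]
    rcases eq_or_ne i j with rfl | hij
    · simp [singVals_sq X i, hσ]
    · simp [hij]
  have hzero : ∀ i, σ i = 0 → X *ᵥ e i = 0 := by
    intro i h
    have h2 := hXe i i
    rw [if_pos rfl, h] at h2
    rw [← dotProduct_self_eq_zero (v := X *ᵥ e i), h2]; norm_num
  have hexp : ∀ a b : Fin m₂, ∑ i, e i a * e i b = if a = b then 1 else 0 := by
    have hee' : ∀ i j, ∑ k, e i k * e j k = if i = j then 1 else 0 := by
      intro i j; simpa [dotProduct] using hee i j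
    have hM : (Matrix.of fun k i => e i k)ᵀ * (Matrix.of fun k i => e i k) = 1 := by
      ext i j
      simp only [Matrix.mul_apply, Matrix.transpose_apply, Matrix.of_apply, Matrix.one_apply]
      exact hee' i j
    have hM2 := mul_eq_one_comm.mp hM
    intro a b
    have h3 := congrFun (congrFun hM2 a) b
    simpa [Matrix.mul_apply, Matrix.one_apply] using h3
  refine ⟨fun i => if σ i = 0 then 0 else (σ i)⁻¹ • (X *ᵥ e i),
      fun i => if σ i = 0 then 0 else e i, ?_, ?_, ?_, ?_, ?_⟩
  · intro i j
    rcases eq_or_ne (σ i) 0 with hi | hi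
    · simp [hi]
    rcases eq_or_ne (σ j) 0 with hj | hj
    · have hij : i ≠ j := fun h => hi (h ▸ hj)
      simp [hi, hj, hij]
    simp only [if_neg hi, if_neg hj, smul_dotProduct, dotProduct_smul, smul_eq_mul, hXe i j]
    rcases eq_or_ne i j with rfl | hij
    · rw [if_pos rfl, if_pos ⟨rfl, hi⟩]
      field_simp
    · simp [hij]
  · intro i j
    rcases eq_or_ne (σ i) 0 with hi | hi
    · simp [hi]
    rcases eq_or_ne (σ j) 0 with hj | hj
    · have hij : i ≠ j := fun h => hi (h ▸ hj)
      simp [hi, hj, hij]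
    simp only [if_neg hi, if_neg hj, hee i j]
    rcases eq_or_ne i j with rfl | hij
    · simp [hi]
    · simp [hij]
  · intro k l
    have key : ∑ i, (X *ᵥ e i) k * e i l = X k l := by
      simp only [Matrix.mulVec, dotProduct, Finset.sum_mul]
      rw [Finset.sum_comm]
      have h4 : ∀ j, ∑ i, X k j * e i j * e i l = X k j * if j = l then 1 else 0 := by
        intro j
        rw [← hexp j l, Finset.mul_sum]
        congr 1; funext i; ring
      rw [Finset.sum_congr rfl fun j _ => h4 j]
      simp
    rw [← key]
    congr 1; funext i
    rcases eq_or_ne (σ i) 0 with hi | hi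
    · rw [hzero i hi]; simp [hi]
    · simp only [if_neg hi, Pi.smul_apply, smul_eq_mul]
      field_simp
  · intro i
    rcases eq_or_ne (σ i) 0 with hi | hi
    · exact ⟨0, by simp [hi]⟩
    · exact ⟨(σ i)⁻¹ • e i, by rw [Matrix.mulVec_smul]; simp [hi]⟩
  · intro i
    rcases eq_or_ne (σ i) 0 with hi | hi
    · exact ⟨0, by simp [hi]⟩
    · refine ⟨(σ i ^ 2)⁻¹ • (X *ᵥ e i), ?_⟩
      rw [Matrix.mulVec_smul, Matrix.mulVec_mulVec, hmul i, ← singVals_sq, ← hσ]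
      simp only [if_neg hi, smul_smul]
      rw [inv_mul_cancel₀ (pow_ne_zero 2 hi), one_smul]

lemma sum_dotProduct' {ι : Type*} {n : ℕ} [Fintype ι] (f : ι → Fin n → ℝ) (x : Fin n → ℝ) :
    (∑ i, f i) ⬝ᵥ x = ∑ i, f i ⬝ᵥ x := by
  simp only [dotProduct, Finset.sum_apply, Finset.sum_mul]
  rw [Finset.sum_comm]

lemma bessel {n : ℕ} {ι : Type*} [Fintype ι] (u : ι → Fin n → ℝ)
    (h : ∀ i j, i ≠ j → u i ⬝ᵥ u j = 0)
    (h1 : ∀ i, u i ⬝ᵥ u i ≤ 1) (x : Fin n → ℝ) :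
    ∑ i, (u i ⬝ᵥ x) ^ 2 ≤ x ⬝ᵥ x := by
  set c : ι → ℝ := fun i => u i ⬝ᵥ x with hc
  have hsx : (∑ i, c i • u i) ⬝ᵥ x = ∑ i, c i ^ 2 := by
    rw [sum_dotProduct']
    refine Finset.sum_congr rfl fun i _ => ?_
    rw [smul_dotProduct, smul_eq_mul, sq]
  have hss : (∑ i, c i • u i) ⬝ᵥ (∑ j, c j • u j) = ∑ i, c i ^ 2 * (u i ⬝ᵥ u i) := by
    rw [sum_dotProduct']
    refine Finset.sum_congr rfl fun i _ => ?_
    rw [smul_dotProduct, dotProduct_comm, sum_dotProduct']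
    have : ∀ j, (c j • u j) ⬝ᵥ u i = c j * (u j ⬝ᵥ u i) := fun j => by
      rw [smul_dotProduct, smul_eq_mul]
    simp only [this]
    rw [Finset.sum_eq_single i (fun j _ hji => by rw [h j i hji, mul_zero])
      (fun hi => absurd (Finset.mem_univ i) hi)]
    rw [smul_eq_mul, dotProduct_comm]
    ring
  have hpos : 0 ≤ (x - ∑ i, c i • u i) ⬝ᵥ (x - ∑ i, c i • u i) :=
    Finset.sum_nonneg fun k _ => mul_self_nonneg _
  have expand : (x - ∑ i, c i • u i) ⬝ᵥ (x - ∑ i, c i • u i)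
      = x ⬝ᵥ x - 2 * ∑ i, c i ^ 2 + ∑ i, c i ^ 2 * (u i ⬝ᵥ u i) := by
    rw [sub_dotProduct, dotProduct_sub, dotProduct_sub, hss,
      dotProduct_comm x (∑ i, c i • u i), hsx]
    ring
  have hterm : ∑ i, c i ^ 2 * (u i ⬝ᵥ u i) ≤ ∑ i, c i ^ 2 :=
    Finset.sum_le_sum fun i _ => by
      have := mul_le_mul_of_nonneg_left (h1 i) (sq_nonneg (c i)); linarith
  rw [expand] at hpos
  have : ∑ i, c i ^ 2 ≤ x ⬝ᵥ x := by linarith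
  exact this

def mpair {m₁ m₂ : ℕ} (A B : Matrix (Fin m₁) (Fin m₂) ℝ) : ℝ := ∑ k, ∑ l, A k l * B k l

lemma mpair_add_right {m₁ m₂ : ℕ} (W A B : Matrix (Fin m₁) (Fin m₂) ℝ) :
    mpair W (A + B) = mpair W A + mpair W B := by
  simp [mpair, Matrix.add_apply, mul_add, Finset.sum_add_distrib]

lemma mpair_neg_left {m₁ m₂ : ℕ} (W A : Matrix (Fin m₁) (Fin m₂) ℝ) :
    mpair (-W) A = -mpair W A := by
  simp [mpair, Finset.sum_neg_distrib]

lemma mpair_svd {m₁ m₂ : ℕ} (W X : Matrix (Fin m₁) (Fin m₂) ℝ)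
    (σ : Fin m₂ → ℝ) (u : Fin m₂ → Fin m₁ → ℝ) (v : Fin m₂ → Fin m₂ → ℝ)
    (hX : ∀ k l, X k l = ∑ i, σ i * u i k * v i l) :
    mpair W X = ∑ i, σ i * (u i ⬝ᵥ (W *ᵥ v i)) := by
  unfold mpair
  have step1 : ∀ k, ∑ l, W k l * X k l = ∑ i, σ i * u i k * (∑ l, W k l * v i l) := by
    intro k
    simp only [hX, Finset.mul_sum]
    rw [Finset.sum_comm]
    exact Finset.sum_congr rfl fun i _ =>
      Finset.sum_congr rfl fun l _ => by ring
  simp only [step1]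
  rw [Finset.sum_comm]
  refine Finset.sum_congr rfl fun i _ => ?_
  simp only [dotProduct, mulVec, Finset.mul_sum]
  refine Finset.sum_congr rfl fun k _ => ?_
  exact Finset.sum_congr rfl fun l _ => by ring

lemma rank1_apply {m₁ m₂ : ℕ} {ι : Type*} [Fintype ι] (u : ι → Fin m₁ → ℝ)
    (v : ι → Fin m₂ → ℝ) (a : Fin m₁ → ℝ) (b : Fin m₂ → ℝ) :
    a ⬝ᵥ ((Matrix.of fun k l => ∑ i, u i k * v i l) *ᵥ b) = ∑ i, (a ⬝ᵥ u i) * (v i ⬝ᵥ b) := by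
  have hMv : ∀ k, ((Matrix.of fun k l => ∑ i, u i k * v i l) *ᵥ b) k
      = ∑ i, u i k * (v i ⬝ᵥ b) := by
    intro k
    simp only [mulVec, dotProduct, Matrix.of_apply, Finset.sum_mul]
    rw [Finset.sum_comm]
    exact Finset.sum_congr rfl fun i _ => by rw [Finset.mul_sum]; exact Finset.sum_congr rfl fun l _ => by ring
  calc a ⬝ᵥ ((Matrix.of fun k l => ∑ i, u i k * v i l) *ᵥ b)
      = ∑ k, a k * ∑ i, u i k * (v i ⬝ᵥ b) := by
        refine Finset.sum_congr rfl fun k _ => ?_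
        rw [hMv k]
    _ = ∑ i, (a ⬝ᵥ u i) * (v i ⬝ᵥ b) := by
        simp only [Finset.mul_sum]
        rw [Finset.sum_comm]
        refine Finset.sum_congr rfl fun i _ => ?_
        simp only [dotProduct, Finset.sum_mul]
        exact Finset.sum_congr rfl fun k _ => by ring

def DB {m₁ m₂ : ℕ} (W : Matrix (Fin m₁) (Fin m₂) ℝ) (c : ℝ) : Prop :=
  ∀ a b, a ⬝ᵥ a ≤ 1 → b ⬝ᵥ b ≤ 1 → a ⬝ᵥ (W *ᵥ b) ≤ c

lemma DB.mpair_le {m₁ m₂ : ℕ} {W : Matrix (Fin m₁) (Fin m₂) ℝ} {c : ℝ}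
    (hW : DB W c) (X : Matrix (Fin m₁) (Fin m₂) ℝ) : mpair W X ≤ c * nucNorm X := by
  obtain ⟨u, v, huu, hvv, hX, -, -⟩ := svd_exists X
  rw [mpair_svd W X _ u v hX, nucNorm, Finset.mul_sum]
  refine Finset.sum_le_sum fun i _ => ?_
  have h1 : u i ⬝ᵥ u i ≤ 1 := by rw [huu i i]; split <;> norm_num
  have h2 : v i ⬝ᵥ v i ≤ 1 := by rw [hvv i i]; split <;> norm_num
  have h3 := hW (u i) (v i) h1 h2
  have hσ := singVals_nonneg X i
  nlinarith

lemma DB.neg {m₁ m₂ : ℕ} {W : Matrix (Fin m₁) (Fin m₂) ℝ} {c : ℝ} (h : DB W c) :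
    DB (-W) c := by
  intro a b ha hb
  have h4 := h (-a) b (by simpa [neg_dotProduct, dotProduct_neg] using ha) hb
  simpa [Matrix.neg_mulVec, dotProduct_neg, neg_dotProduct] using h4

lemma DB.abs_mpair_le {m₁ m₂ : ℕ} {W : Matrix (Fin m₁) (Fin m₂) ℝ} {c : ℝ}
    (hW : DB W c) (X : Matrix (Fin m₁) (Fin m₂) ℝ) : |mpair W X| ≤ c * nucNorm X := by
  rw [abs_le]
  constructor
  · have := hW.neg.mpair_le X
    rw [mpair_neg_left] at this
    linarith
  · exact hW.mpair_le X

lemma projM_mulVec {k : ℕ} (S : Submodule ℝ (EuclideanSpace ℝ (Fin k))) (x : Fin k → ℝ) :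
    projM S *ᵥ x = WithLp.ofLp (S.orthogonalProjectionOnto (WithLp.toLp 2 x) : EuclideanSpace ℝ (Fin k)) := by
  have h := LinearMap.toMatrix_mulVec_repr (EuclideanSpace.basisFun (Fin k) ℝ).toBasis
    (EuclideanSpace.basisFun (Fin k) ℝ).toBasis
    (S.subtype ∘ₗ (S.orthogonalProjectionOnto).toLinearMap) (WithLp.toLp 2 x)
  exact h

lemma proj_kill {m n : ℕ} (X : Matrix (Fin m) (Fin n) ℝ) (w : Fin n → ℝ) :
    projM (colSpace X)ᗮ *ᵥ (X *ᵥ w) = 0 := by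
  rw [projM_mulVec]
  set y : EuclideanSpace ℝ (Fin m) := WithLp.toLp 2 (X *ᵥ w) with hy
  have hmem : y ∈ colSpace X := ⟨WithLp.toLp 2 w, rfl⟩
  have h0 : (colSpace X)ᗮ.orthogonalProjectionOnto y = 0 :=
    Submodule.orthogonalProjectionOnto_apply_of_mem_orthogonal
      ((colSpace X).le_orthogonal_orthogonal hmem)
  rw [h0]
  rfl

lemma projM_transpose {k : ℕ} (S : Submodule ℝ (EuclideanSpace ℝ (Fin k))) :
    (projM S)ᵀ = projM S := by
  have hentry : ∀ a b : Fin k, projM S a b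
      = (S.orthogonalProjectionOnto (EuclideanSpace.single b 1) : EuclideanSpace ℝ (Fin k)) a := by
    intro a b
    have h := congrFun (projM_mulVec S (Pi.single b 1)) a
    simp only [Matrix.mulVec_single, mul_one, MulOpposite.op_one, one_smul, Matrix.col_apply] at h
    exact h
  have h1 : ∀ (z : EuclideanSpace ℝ (Fin k)) (a : Fin k),
      z a = inner (𝕜 := ℝ) (EuclideanSpace.single a (1:ℝ)) z := by
    intro z a
    rw [EuclideanSpace.inner_single_left]
    simp
  ext i j
  rw [Matrix.transpose_apply, hentry j i, hentry i j]
  calc (S.orthogonalProjectionOnto (EuclideanSpace.single i 1) : EuclideanSpace ℝ (Fin k)) j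
      = inner (𝕜 := ℝ) (EuclideanSpace.single j (1:ℝ))
          (S.orthogonalProjectionOnto (EuclideanSpace.single i 1) : EuclideanSpace ℝ (Fin k)) := h1 _ j
    _ = inner (𝕜 := ℝ) (S.orthogonalProjectionOnto (EuclideanSpace.single i 1) : EuclideanSpace ℝ (Fin k))
          (EuclideanSpace.single j (1:ℝ)) := real_inner_comm _ _
    _ = inner (𝕜 := ℝ) (EuclideanSpace.single i (1:ℝ))
          (S.orthogonalProjectionOnto (EuclideanSpace.single j 1) : EuclideanSpace ℝ (Fin k)) :=
        Submodule.inner_starProjection_left_eq_right S _ _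
    _ = (S.orthogonalProjectionOnto (EuclideanSpace.single j 1) : EuclideanSpace ℝ (Fin k)) i := (h1 _ i).symm


lemma symdot {k : ℕ} (S : Submodule ℝ (EuclideanSpace ℝ (Fin k))) (x y : Fin k → ℝ) :
    x ⬝ᵥ (projM S *ᵥ y) = (projM S *ᵥ x) ⬝ᵥ y := by
  rw [dotProduct_mulVec]
  conv_lhs => rw [← projM_transpose S]
  rw [vecMul_transpose]

lemma singVals_le_opNorm {m₁ m₂ : ℕ} (X : Matrix (Fin m₁) (Fin m₂) ℝ) (i : Fin m₂) :
    singVals X i ≤ opNorm X :=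
  le_ciSup (Set.Finite.bddAbove (Set.finite_range _)) i

lemma opNorm_nonneg {m₁ m₂ : ℕ} (X : Matrix (Fin m₁) (Fin m₂) ℝ) : 0 ≤ opNorm X := by
  rcases isEmpty_or_nonempty (Fin m₂) with h | h
  · rw [opNorm, Real.iSup_of_isEmpty]
  · exact (singVals_nonneg X (Classical.arbitrary _)).trans (singVals_le_opNorm X _)

lemma nucNorm_nonneg {m₁ m₂ : ℕ} (X : Matrix (Fin m₁) (Fin m₂) ℝ) : 0 ≤ nucNorm X :=
  Finset.sum_nonneg fun i _ => singVals_nonneg X i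

lemma DB_opNorm {m₁ m₂ : ℕ} (G : Matrix (Fin m₁) (Fin m₂) ℝ) : DB G (opNorm G) := by
  intro a b ha hb
  obtain ⟨u, v, huu, hvv, hG, -, -⟩ := svd_exists G
  have hform : a ⬝ᵥ (G *ᵥ b) = ∑ i, singVals G i * ((a ⬝ᵥ u i) * (v i ⬝ᵥ b)) := by
    have hGof : G = Matrix.of fun k l => ∑ i, (singVals G i • u i) k * v i l := by
      ext k l
      rw [hG k l]
      exact Finset.sum_congr rfl fun i _ => by simp [mul_assoc]
    conv_lhs => rw [hGof]
    rw [rank1_apply]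
    refine Finset.sum_congr rfl fun i _ => ?_
    rw [dotProduct_smul, smul_eq_mul]
    ring
  rw [hform]
  have hca : ∑ i, (a ⬝ᵥ u i) ^ 2 ≤ 1 := by
    have hb2 := bessel u (fun i j hij => by rw [huu i j, if_neg (by tauto)])
      (fun i => by rw [huu i i]; split <;> norm_num) a
    have heq : ∑ i, (a ⬝ᵥ u i) ^ 2 = ∑ i, (u i ⬝ᵥ a) ^ 2 :=
      Finset.sum_congr rfl fun i _ => by rw [dotProduct_comm]
    rw [heq]; exact hb2.trans ha
  have hcb : ∑ i, (v i ⬝ᵥ b) ^ 2 ≤ 1 :=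
    (bessel v (fun i j hij => by rw [hvv i j, if_neg (by tauto)])
      (fun i => by rw [hvv i i]; split <;> norm_num) b).trans hb
  set T := ∑ i, |a ⬝ᵥ u i| * |v i ⬝ᵥ b| with hT
  have hTnn : 0 ≤ T := Finset.sum_nonneg fun i _ => mul_nonneg (abs_nonneg _) (abs_nonneg _)
  have hT2 : T ^ 2 ≤ 1 := by
    have hcs := Finset.sum_mul_sq_le_sq_mul_sq Finset.univ
      (fun i => |a ⬝ᵥ u i|) (fun i => |v i ⬝ᵥ b|)
    simp only [sq_abs] at hcs
    calc T ^ 2 ≤ (∑ i, (a ⬝ᵥ u i) ^ 2) * ∑ i, (v i ⬝ᵥ b) ^ 2 := hcs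
      _ ≤ 1 := by
        nlinarith [Finset.sum_nonneg fun i (_ : i ∈ Finset.univ) => sq_nonneg (a ⬝ᵥ u i),
          Finset.sum_nonneg fun i (_ : i ∈ Finset.univ) => sq_nonneg (v i ⬝ᵥ b)]
  have hT1 : T ≤ 1 := by nlinarith
  have hstep : ∑ i, singVals G i * ((a ⬝ᵥ u i) * (v i ⬝ᵥ b)) ≤ opNorm G * T := by
    rw [hT, Finset.mul_sum]
    refine Finset.sum_le_sum fun i _ => ?_
    have h1 : singVals G i * ((a ⬝ᵥ u i) * (v i ⬝ᵥ b))
        ≤ singVals G i * (|a ⬝ᵥ u i| * |v i ⬝ᵥ b|) := by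
      refine mul_le_mul_of_nonneg_left ?_ (singVals_nonneg G i)
      calc (a ⬝ᵥ u i) * (v i ⬝ᵥ b) ≤ |(a ⬝ᵥ u i) * (v i ⬝ᵥ b)| := le_abs_self _
        _ = |a ⬝ᵥ u i| * |v i ⬝ᵥ b| := abs_mul _ _
    exact h1.trans (mul_le_mul_of_nonneg_right (singVals_le_opNorm G i)
      (mul_nonneg (abs_nonneg _) (abs_nonneg _)))
  calc ∑ i, singVals G i * ((a ⬝ᵥ u i) * (v i ⬝ᵥ b)) ≤ opNorm G * T := hstep
    _ ≤ opNorm G * 1 := mul_le_mul_of_nonneg_left hT1 (opNorm_nonneg G)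
    _ = opNorm G := mul_one _

lemma DB_of_frames {m₁ m₂ : ℕ} {ι : Type*} [Fintype ι] (U : ι → Fin m₁ → ℝ)
    (V : ι → Fin m₂ → ℝ)
    (hU : ∀ i j, i ≠ j → U i ⬝ᵥ U j = 0) (hU1 : ∀ i, U i ⬝ᵥ U i ≤ 1)
    (hV : ∀ i j, i ≠ j → V i ⬝ᵥ V j = 0) (hV1 : ∀ i, V i ⬝ᵥ V i ≤ 1) :
    DB (Matrix.of fun k l => ∑ i, U i k * V i l) 1 := by
  intro a b ha hb
  rw [rank1_apply]
  have hca : ∑ i, (a ⬝ᵥ U i) ^ 2 ≤ 1 := by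
    have hb2 := bessel U hU hU1 a
    have heq : ∑ i, (a ⬝ᵥ U i) ^ 2 = ∑ i, (U i ⬝ᵥ a) ^ 2 :=
      Finset.sum_congr rfl fun i _ => by rw [dotProduct_comm]
    rw [heq]; exact hb2.trans ha
  have hcb : ∑ i, (V i ⬝ᵥ b) ^ 2 ≤ 1 := (bessel V hV hV1 b).trans hb
  have hcs := Finset.sum_mul_sq_le_sq_mul_sq Finset.univ
    (fun i => a ⬝ᵥ U i) (fun i => V i ⬝ᵥ b)
  have h1 : (∑ i, (a ⬝ᵥ U i) * (V i ⬝ᵥ b)) ^ 2 ≤ 1 := by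
    calc (∑ i, (a ⬝ᵥ U i) * (V i ⬝ᵥ b)) ^ 2
        ≤ (∑ i, (a ⬝ᵥ U i) ^ 2) * ∑ i, (V i ⬝ᵥ b) ^ 2 := hcs
      _ ≤ 1 := by
        nlinarith [Finset.sum_nonneg fun i (_ : i ∈ Finset.univ) => sq_nonneg (a ⬝ᵥ U i),
          Finset.sum_nonneg fun i (_ : i ∈ Finset.univ) => sq_nonneg (V i ⬝ᵥ b)]
  nlinarith [h1]

lemma dual_cert {m₁ m₂ : ℕ} (A : Matrix (Fin m₁) (Fin m₂) ℝ) :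
    ∃ W, DB W 1 ∧ mpair W A = nucNorm A := by
  obtain ⟨u, v, huu, hvv, hA, -, -⟩ := svd_exists A
  refine ⟨Matrix.of fun k l => ∑ i, u i k * v i l,
    DB_of_frames u v (fun i j hij => by rw [huu i j, if_neg (by tauto)])
      (fun i => by rw [huu i i]; split <;> norm_num)
      (fun i j hij => by rw [hvv i j, if_neg (by tauto)])
      (fun i => by rw [hvv i i]; split <;> norm_num), ?_⟩
  rw [mpair_svd _ A (singVals A) u v hA, nucNorm]
  refine Finset.sum_congr rfl fun i _ => ?_
  rw [rank1_apply]
  have e1 : ∑ j, (u i ⬝ᵥ u j) * (v j ⬝ᵥ v i)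
      = if singVals A i ≠ 0 then 1 else 0 := by
    rw [Finset.sum_eq_single i (fun j _ hji => by
        rw [huu i j, if_neg (by tauto), zero_mul])
      (fun hi => absurd (Finset.mem_univ i) hi)]
    rw [huu i i, hvv i i]
    split <;> simp_all
  rw [e1]
  split <;> simp_all

lemma dual_cert_pair {m₁ m₂ : ℕ} (A B : Matrix (Fin m₁) (Fin m₂) ℝ)
    (hcu : ∀ wa wb, (A *ᵥ wa) ⬝ᵥ (B *ᵥ wb) = 0)
    (hcv : ∀ wa wb, (Aᵀ *ᵥ wa) ⬝ᵥ (Bᵀ *ᵥ wb) = 0) :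
    ∃ W, DB W 1 ∧ mpair W A = nucNorm A ∧ mpair W B = nucNorm B := by
  obtain ⟨u1, v1, huu1, hvv1, hA, humem1, hvmem1⟩ := svd_exists A
  obtain ⟨u2, v2, huu2, hvv2, hB, humem2, hvmem2⟩ := svd_exists B
  have hcrossU : ∀ i j, u1 i ⬝ᵥ u2 j = 0 := by
    intro i j
    obtain ⟨wa, hwa⟩ := humem1 i
    obtain ⟨wb, hwb⟩ := humem2 j
    rw [hwa, hwb]; exact hcu wa wb
  have hcrossV : ∀ i j, v1 i ⬝ᵥ v2 j = 0 := by
    intro i j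
    obtain ⟨wa, hwa⟩ := hvmem1 i
    obtain ⟨wb, hwb⟩ := hvmem2 j
    rw [hwa, hwb]; exact hcv wa wb
  set U : Fin m₂ ⊕ Fin m₂ → Fin m₁ → ℝ := Sum.elim u1 u2 with hU
  set V : Fin m₂ ⊕ Fin m₂ → Fin m₂ → ℝ := Sum.elim v1 v2 with hV
  have hUorth : ∀ i j, i ≠ j → U i ⬝ᵥ U j = 0 := by
    rintro (i | i) (j | j) hij
    · have : i ≠ j := fun h => hij (by rw [h])
      simp only [hU, Sum.elim_inl]
      rw [huu1 i j, if_neg (by tauto)]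
    · simpa only [hU, Sum.elim_inl, Sum.elim_inr] using hcrossU i j
    · simp only [hU, Sum.elim_inl, Sum.elim_inr]
      rw [dotProduct_comm]; exact hcrossU j i
    · have : i ≠ j := fun h => hij (by rw [h])
      simp only [hU, Sum.elim_inr]
      rw [huu2 i j, if_neg (by tauto)]
  have hVorth : ∀ i j, i ≠ j → V i ⬝ᵥ V j = 0 := by
    rintro (i | i) (j | j) hij
    · have : i ≠ j := fun h => hij (by rw [h])
      simp only [hV, Sum.elim_inl]
      rw [hvv1 i j, if_neg (by tauto)]
    · simpa only [hV, Sum.elim_inl, Sum.elim_inr] using hcrossV i j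
    · simp only [hV, Sum.elim_inl, Sum.elim_inr]
      rw [dotProduct_comm]; exact hcrossV j i
    · have : i ≠ j := fun h => hij (by rw [h])
      simp only [hV, Sum.elim_inr]
      rw [hvv2 i j, if_neg (by tauto)]
  have hU1 : ∀ i, U i ⬝ᵥ U i ≤ 1 := by
    rintro (i | i) <;> simp only [hU, Sum.elim_inl, Sum.elim_inr]
    · rw [huu1 i i]; split <;> norm_num
    · rw [huu2 i i]; split <;> norm_num
  have hV1 : ∀ i, V i ⬝ᵥ V i ≤ 1 := by
    rintro (i | i) <;> simp only [hV, Sum.elim_inl, Sum.elim_inr]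
    · rw [hvv1 i i]; split <;> norm_num
    · rw [hvv2 i i]; split <;> norm_num
  refine ⟨Matrix.of fun k l => ∑ i, U i k * V i l,
    DB_of_frames U V hUorth hU1 hVorth hV1, ?_, ?_⟩
  · rw [mpair_svd _ A (singVals A) u1 v1 hA, nucNorm]
    refine Finset.sum_congr rfl fun i _ => ?_
    rw [rank1_apply, Fintype.sum_sum_type]
    simp only [hU, hV, Sum.elim_inl, Sum.elim_inr]
    have e1 : ∑ j, (u1 i ⬝ᵥ u1 j) * (v1 j ⬝ᵥ v1 i)
        = if singVals A i ≠ 0 then 1 else 0 := by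
      rw [Finset.sum_eq_single i (fun j _ hji => by
          rw [huu1 i j, if_neg (by tauto), zero_mul])
        (fun hi => absurd (Finset.mem_univ i) hi)]
      rw [huu1 i i, hvv1 i i]
      split <;> simp_all
    have e2 : ∑ j, (u1 i ⬝ᵥ u2 j) * (v2 j ⬝ᵥ v1 i) = 0 :=
      Finset.sum_eq_zero fun j _ => by rw [hcrossU i j, zero_mul]
    rw [e1, e2, add_zero]
    split <;> simp_all
  · rw [mpair_svd _ B (singVals B) u2 v2 hB, nucNorm]
    refine Finset.sum_congr rfl fun i _ => ?_
    rw [rank1_apply, Fintype.sum_sum_type]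
    simp only [hU, hV, Sum.elim_inl, Sum.elim_inr]
    have e1 : ∑ j, (u2 i ⬝ᵥ u2 j) * (v2 j ⬝ᵥ v2 i)
        = if singVals B i ≠ 0 then 1 else 0 := by
      rw [Finset.sum_eq_single i (fun j _ hji => by
          rw [huu2 i j, if_neg (by tauto), zero_mul])
        (fun hi => absurd (Finset.mem_univ i) hi)]
      rw [huu2 i i, hvv2 i i]
      split <;> simp_all
    have e2 : ∑ j, (u2 i ⬝ᵥ u1 j) * (v1 j ⬝ᵥ v2 i) = 0 :=
      Finset.sum_eq_zero fun j _ => by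
        rw [dotProduct_comm, hcrossU j i, zero_mul]
    rw [e1, e2, zero_add]
    split <;> simp_all

attribute [local instance] Matrix.normedAddCommGroup Matrix.normedSpace

/-- Lemma 2(i): for a convex differentiable data-fitting term `f` (in the paper
`f = L_Y`), if `X` has smaller penalized objective than `X̃` and
`λ ≥ 2‖∇f(X̃)‖_{σ,∞}`, then the error lies in a cone. `Gf` is the gradient matrix of `f` at `X̃`,
i.e. the matrix representing the Fréchet derivative `L` of `f` at `X̃`. -/
theorem nuc_cone_condition (m₁ m₂ : ℕ) (f : Matrix (Fin m₁) (Fin m₂) ℝ → ℝ)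
    (hconv : ConvexOn ℝ Set.univ f) (hdiff : Differentiable ℝ f)
    (lam : ℝ) (hlam : 0 < lam)
    (X Xt : Matrix (Fin m₁) (Fin m₂) ℝ)
    (L : Matrix (Fin m₁) (Fin m₂) ℝ →L[ℝ] ℝ) (hL : HasFDerivAt f L Xt)
    (Gf : Matrix (Fin m₁) (Fin m₂) ℝ)
    (hGf : ∀ k l, Gf k l = L (Matrix.single k l (1 : ℝ)))
    (hmin : f X + lam * nucNorm X ≤ f Xt + lam * nucNorm Xt)
    (hlam2 : 2 * opNorm Gf ≤ lam) :
    nucNorm (Pperp Xt (X - Xt)) ≤ 3 * nucNorm (Ppar Xt (X - Xt)) := by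
  set Δ := X - Xt with hΔ
  set M := Pperp Xt Δ with hM
  set Pp := Ppar Xt Δ with hPp
  -- cross-orthogonality conditions between Xt and M
  have hcu : ∀ wa wb, (Xt *ᵥ wa) ⬝ᵥ (M *ᵥ wb) = 0 := by
    intro wa wb
    have h1 : M *ᵥ wb
        = projM (Submodule.orthogonal (colSpace Xt)) *ᵥ
          ((Δ * projM (Submodule.orthogonal (colSpace Xtᵀ))) *ᵥ wb) := by
      rw [Matrix.mulVec_mulVec, ← Matrix.mul_assoc, hM]
      unfold Pperp
      rfl
    rw [h1, symdot, proj_kill Xt wa, zero_dotProduct]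
  have hcv : ∀ wa wb, (Xtᵀ *ᵥ wa) ⬝ᵥ (Mᵀ *ᵥ wb) = 0 := by
    intro wa wb
    have h1 : Mᵀ *ᵥ wb
        = projM (Submodule.orthogonal (colSpace Xtᵀ)) *ᵥ
          ((projM (Submodule.orthogonal (colSpace Xt)) * Δ)ᵀ *ᵥ wb) := by
      rw [Matrix.mulVec_mulVec, hM]
      unfold Pperp
      rw [Matrix.transpose_mul, projM_transpose]
    rw [h1, symdot, proj_kill Xtᵀ wa, zero_dotProduct]
  obtain ⟨W, hW, hWXt, hWM⟩ := dual_cert_pair Xt M hcu hcv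
  obtain ⟨W2, hW2, hW2Δ⟩ := dual_cert Δ
  have hsplit : M + Pp = Δ := by
    rw [hPp]
    unfold Ppar
    rw [← hM]
    abel
  have hXeq : X = Xt + (M + Pp) := by
    rw [hsplit, hΔ]
    abel
  -- decomposability lower bound on nucNorm X
  have h5 : nucNorm Xt + nucNorm M - nucNorm Pp ≤ nucNorm X := by
    have hWX : mpair W X ≤ 1 * nucNorm X := hW.mpair_le X
    have hsum : mpair W X = mpair W Xt + (mpair W M + mpair W Pp) := by
      conv_lhs => rw [hXeq]
      rw [mpair_add_right, mpair_add_right]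
    have habs := hW.abs_mpair_le Pp
    rw [one_mul] at habs hWX
    have h6 := abs_le.mp habs
    rw [hsum, hWXt, hWM] at hWX
    linarith [h6.1]
  -- triangle inequality on nucNorm Δ
  have h4 : nucNorm Δ ≤ nucNorm M + nucNorm Pp := by
    have hsum : mpair W2 Δ = mpair W2 M + mpair W2 Pp := by
      conv_lhs => rw [← hsplit]
      rw [mpair_add_right]
    have h1 := abs_le.mp (hW2.abs_mpair_le M)
    have h2 := abs_le.mp (hW2.abs_mpair_le Pp)
    rw [one_mul] at h1 h2
    rw [← hW2Δ, hsum]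
    linarith [h1.2, h2.2]
  -- convexity: first-order condition
  have hconv1 : f Xt + L Δ ≤ f X := by
    set γ : ℝ → Matrix (Fin m₁) (Fin m₂) ℝ := fun t => t • Δ + Xt with hγ
    have hγ0 : γ 0 = Xt := by simp [hγ]
    have hγ1 : γ 1 = X := by simp [hγ, hΔ]
    have hgconv : ConvexOn ℝ Set.univ (f ∘ γ) := by
      have haff : ConvexOn ℝ ((AffineMap.lineMap Xt X : ℝ →ᵃ[ℝ] _) ⁻¹' Set.univ)
          (f ∘ (AffineMap.lineMap Xt X : ℝ →ᵃ[ℝ] _)) := hconv.comp_affineMap _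
      have heq : (f ∘ (AffineMap.lineMap Xt X : ℝ →ᵃ[ℝ] _)) = f ∘ γ := by
        funext t
        simp [γ, hΔ, AffineMap.lineMap_apply, Function.comp]
      rwa [heq, Set.preimage_univ] at haff
    have hdγ : HasDerivAt γ Δ 0 := by
      have h1 : HasDerivAt (fun t : ℝ => t • Δ) ((1:ℝ) • Δ) 0 :=
        (hasDerivAt_id 0).smul_const Δ
      have h3 := h1.add_const Xt
      rw [one_smul] at h3
      exact h3
    have hd : HasDerivAt (f ∘ γ) (L Δ) 0 := by
      have h2 := (hγ0 ▸ hL : HasFDerivAt f L (γ 0)).comp_hasDerivAt 0 hdγ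
      exact h2
    have hslope := hgconv.deriv_le_slope (Set.mem_univ 0) (Set.mem_univ 1) one_pos
      hd.differentiableAt
    rw [hd.deriv] at hslope
    have hsl : slope (f ∘ γ) 0 1 = f X - f Xt := by
      simp [slope, hγ0, hγ1, Function.comp]
    rw [hsl] at hslope
    linarith
  -- the derivative is the pairing with the gradient matrix
  have hLrep : L Δ = mpair Gf Δ := by
    have hrep : Δ = ∑ k, ∑ l, Matrix.single k l (Δ k l) :=
      Matrix.matrix_eq_sum_single Δ
    calc L Δ = L (∑ k, ∑ l, Matrix.single k l (Δ k l)) := by rw [← hrep]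
      _ = ∑ k, ∑ l, L (Matrix.single k l (Δ k l)) := by
          rw [map_sum]
          exact Finset.sum_congr rfl fun k _ => map_sum L _ _
      _ = ∑ k, ∑ l, Gf k l * Δ k l := by
          refine Finset.sum_congr rfl fun k _ => Finset.sum_congr rfl fun l _ => ?_
          have hstd : Matrix.single k l (Δ k l)
              = Δ k l • Matrix.single k l 1 := by
            rw [Matrix.smul_single, smul_eq_mul, mul_one]
          rw [hstd, L.map_smul, smul_eq_mul, hGf k l, mul_comm]
      _ = mpair Gf Δ := rfl
  have hGbound := abs_le.mp ((DB_opNorm Gf).abs_mpair_le Δ)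
  have hnn : 0 ≤ nucNorm Δ := nucNorm_nonneg Δ
  have hgnn : 0 ≤ opNorm Gf := opNorm_nonneg Gf
  -- final arithmetic
  have key1 : lam * nucNorm X ≤ opNorm Gf * nucNorm Δ + lam * nucNorm Xt := by
    have h1 : lam * nucNorm X ≤ -(L Δ) + lam * nucNorm Xt := by linarith [hmin, hconv1]
    have h2 : -(L Δ) ≤ opNorm Gf * nucNorm Δ := by
      rw [hLrep]
      linarith [hGbound.1]
    linarith
  have key2 : opNorm Gf * nucNorm Δ ≤ (lam / 2) * (nucNorm M + nucNorm Pp) := by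
    have h1 : opNorm Gf * nucNorm Δ ≤ (lam / 2) * nucNorm Δ :=
      mul_le_mul_of_nonneg_right (by linarith) hnn
    have h2 : (lam / 2) * nucNorm Δ ≤ (lam / 2) * (nucNorm M + nucNorm Pp) :=
      mul_le_mul_of_nonneg_left h4 (by linarith)
    linarith
  have key3 : lam * (nucNorm Xt + nucNorm M - nucNorm Pp) ≤ lam * nucNorm X :=
    mul_le_mul_of_nonneg_left h5 hlam.le
  nlinarith [key1, key2, key3, hlam]
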